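/- Let T > 0, let t satisfy 0 ≤ t ≤ T, let λ > 0 and μ ≥ 0 be real numbers. Then exp(-2*t*μ) * exp(-2*T*μ) / (exp(-2*T*μ) + λ)^2 ≤ λ^(t/T - 1), where the power on the right is the real power function. -/

import Mathlib

open Real

/-- Pointwise spectral inequality underlying Lemma 3.2:
`exp(-2tμ)·exp(-2Tμ) / (exp(-2Tμ) + λ)² ≤ λ^(t/T - 1)`. -/
theorem stmt_2 (T t lam mu : ℝ) (hT : 0 < T) (ht0 : 0 ≤ t) (htT : t ≤ T)
    (hlam : 0 < lam) (hmu : 0 ≤ mu) :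
    Real.exp (-2 * t * mu) * Real.exp (-2 * T * mu) / (Real.exp (-2 * T * mu) + lam) ^ 2
      ≤ lam ^ (t / T - 1) := by
  set e := Real.exp (-2 * T * mu) with he
  have hepos : 0 < e := Real.exp_pos _
  set α := t / T with hα
  have hα0 : 0 ≤ α := div_nonneg ht0 hT.le
  have hα1 : α ≤ 1 := (div_le_one hT).mpr htT
  have hexp_t : Real.exp (-2 * t * mu) = e ^ α := by
    rw [Real.rpow_def_of_pos hepos, he, Real.log_exp]
    have hTne : T ≠ 0 := hT.ne'
    congr 1
    field_simp
    ring_nf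
    have hTα : T * α = t := by rw [hα]; field_simp
    linear_combination mu * hTα
  have hp0 : (0:ℝ) ≤ (1 + α) / 2 := by linarith
  have hq0 : (0:ℝ) ≤ (1 - α) / 2 := by linarith
  have hgm : e ^ ((1 + α) / 2) * lam ^ ((1 - α) / 2) ≤ e + lam := by
    have h := Real.geom_mean_le_arith_mean2_weighted hp0 hq0 hepos.le hlam.le (by ring)
    nlinarith [hepos.le, hlam.le]
  have key : e ^ (1 + α) * lam ^ (1 - α) ≤ (e + lam) ^ 2 := by
    have heq : e ^ (1 + α) * lam ^ (1 - α)
        = (e ^ ((1 + α) / 2) * lam ^ ((1 - α) / 2)) ^ 2 := by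
      rw [mul_pow, ← Real.rpow_natCast (e ^ ((1 + α) / 2)),
        ← Real.rpow_natCast (lam ^ ((1 - α) / 2)),
        ← Real.rpow_mul hepos.le, ← Real.rpow_mul hlam.le]
      norm_num
    rw [heq]
    exact pow_le_pow_left₀ (by positivity) hgm 2
  rw [hexp_t, div_le_iff₀ (by positivity)]
  have h1 : e ^ α * e = e ^ (1 + α) := by
    rw [add_comm, Real.rpow_add_one hepos.ne' α]
  have h2 : lam ^ (α - 1) * lam ^ (1 - α) = 1 := by
    rw [← Real.rpow_add hlam]; norm_num
  calc e ^ α * e = lam ^ (α - 1) * (e ^ (1 + α) * lam ^ (1 - α)) := by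
        rw [h1]
        rw [show lam ^ (α - 1) * (e ^ (1 + α) * lam ^ (1 - α))
          = e ^ (1 + α) * (lam ^ (α - 1) * lam ^ (1 - α)) by ring, h2, mul_one]
    _ ≤ lam ^ (α - 1) * (e + lam) ^ 2 :=
        mul_le_mul_of_nonneg_left key (Real.rpow_nonneg hlam.le _)
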